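/- arXiv:1907.01202 — 3 statements merged into one kernel-verified Lean document; each statement's English description precedes it below -/
import Mathlib

section
/- Fix p, ε, α ∈ (0,1) and β ∈ (α,1), and let b := (1−p)^{−1}. Then there exists d₀ such that for every integer d ≥ d₀, setting s := ⌈d^β⌉ and ℓ := √(α·log_b d), there exists a graph G with exactly d vertices and more than (1/2 − ε)·p·d² edges, such that for every family S of s pairwise disjoint ℓ-sets in G, more than (1/2)·d^{−α}·C(s,2) unordered pairs of ℓ-sets in S are non-adjacent. -/
open Finset

namespace RGL
set_option linter.unusedSectionVars false
set_option maxHeartbeats 1000000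
open scoped Classical

section core
variable {ι : Type*} [Fintype ι] [DecidableEq ι]

noncomputable def W (p : ℝ) (ω : ι → Bool) : ℝ := ∏ e : ι, (if ω e then p else 1 - p)

lemma W_nonneg {p : ℝ} (hp0 : 0 ≤ p) (hp1 : p ≤ 1) (ω : ι → Bool) : 0 ≤ W p ω := by
  refine Finset.prod_nonneg fun e _ => ?_
  split <;> linarith

lemma key (p : ℝ) (B : Finset ι) (h : ι → Bool → ℝ) :
    ∑ ω : ι → Bool, W p ω * ∏ e ∈ B, h e (ω e)
      = ∏ e ∈ B, (p * h e true + (1 - p) * h e false) := by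
  have hW : ∀ ω : ι → Bool, W p ω * ∏ e ∈ B, h e (ω e)
      = ∏ e : ι, ((if ω e then p else 1 - p) * (if e ∈ B then h e (ω e) else 1)) := by
    intro ω
    rw [Finset.prod_mul_distrib]
    congr 1
    rw [Finset.prod_ite_mem, Finset.univ_inter]
  calc ∑ ω : ι → Bool, W p ω * ∏ e ∈ B, h e (ω e)
      = ∑ ω ∈ Fintype.piFinset (fun _ : ι => (Finset.univ : Finset Bool)),
          ∏ e : ι, ((if ω e then p else 1 - p) * (if e ∈ B then h e (ω e) else 1)) := by
        rw [Fintype.piFinset_univ]; exact Finset.sum_congr rfl fun ω _ => hW ω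
    _ = ∏ e : ι, ∑ b : Bool, ((if b then p else 1 - p) * (if e ∈ B then h e b else 1)) := by
        rw [Finset.prod_univ_sum]
    _ = ∏ e : ι, (if e ∈ B then p * h e true + (1 - p) * h e false else 1) := by
        refine Finset.prod_congr rfl fun e _ => ?_
        rw [Fintype.sum_bool]
        by_cases he : e ∈ B <;> simp [he]
    _ = ∏ e ∈ B, (p * h e true + (1 - p) * h e false) := by
        rw [Finset.prod_ite_mem, Finset.univ_inter]

lemma sum_W (p : ℝ) : ∑ ω : ι → Bool, W p ω = 1 := by
  have := key (ι := ι) p ∅ (fun _ _ => 1)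
  simpa using this

/-- Chernoff lower-tail bound for sums of independent (disjointly-supported)
0/1-valued product indicators. -/
lemma chernoff {κ : Type*} [DecidableEq κ] {p : ℝ} (hp0 : 0 ≤ p) (hp1 : p ≤ 1)
    (J : Finset κ) (B : κ → Finset ι)
    (hdisj : (J : Set κ).Pairwise (fun i j => Disjoint (B i) (B j)))
    (g : ι → Bool → ℝ) (hg : ∀ e b, g e b = 0 ∨ g e b = 1)
    (t a : ℝ) (ht : 0 ≤ t) :
    ∑ ω ∈ Finset.univ.filter (fun ω : ι → Bool => (∑ j ∈ J, ∏ e ∈ B j, g e (ω e)) ≤ a), W p ω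
      ≤ Real.exp (t * a - (1 - Real.exp (-t)) *
          ∑ j ∈ J, ∏ e ∈ B j, (p * g e true + (1 - p) * g e false)) := by
  set c : ℝ := 1 - Real.exp (-t) with hc
  have hc0 : 0 ≤ c := by
    have : Real.exp (-t) ≤ 1 := Real.exp_le_one_iff.mpr (by linarith)
    simp [hc]; linarith
  have hc1 : c ≤ 1 := by
    have : 0 < Real.exp (-t) := Real.exp_pos _
    simp [hc]; linarith
  set I : κ → (ι → Bool) → ℝ := fun j ω => ∏ e ∈ B j, g e (ω e) with hI
  set μ : κ → ℝ := fun j => ∏ e ∈ B j, (p * g e true + (1 - p) * g e false) with hμ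
  have prod01 : ∀ (s : Finset ι) (f : ι → ℝ), (∀ e ∈ s, f e = 0 ∨ f e = 1) →
      (∏ e ∈ s, f e = 0 ∨ ∏ e ∈ s, f e = 1) := by
    intro s
    induction s using Finset.induction with
    | empty => intro f _; right; simp
    | insert x s hx ih =>
      intro f hf
      rw [Finset.prod_insert hx]
      rcases hf x (Finset.mem_insert_self _ _) with h | h <;>
        rcases ih f (fun e he => hf e (Finset.mem_insert_of_mem he)) with h' | h' <;>
        simp [h, h']
  have hI01 : ∀ j ω, I j ω = 0 ∨ I j ω = 1 := by
    intro j ω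
    exact prod01 (B j) (fun e => g e (ω e)) (fun e _ => hg e (ω e))
  have hfactor : ∀ e : ι, 0 ≤ p * g e true + (1 - p) * g e false ∧
      p * g e true + (1 - p) * g e false ≤ 1 := by
    intro e
    rcases hg e true with h | h <;> rcases hg e false with h' | h' <;>
      rw [h, h'] <;> constructor <;> nlinarith
  have hμ01 : ∀ j, 0 ≤ μ j ∧ μ j ≤ 1 := by
    intro j
    constructor
    · exact Finset.prod_nonneg fun e _ => (hfactor e).1
    · exact Finset.prod_le_one (fun e _ => (hfactor e).1) (fun e _ => (hfactor e).2)
  have hprodexp : ∀ T ∈ J.powerset, ∑ ω : ι → Bool, W p ω * ∏ j ∈ T, I j ω = ∏ j ∈ T, μ j := by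
    intro T hT
    rw [Finset.mem_powerset] at hT
    have hdT : (↑T : Set κ).Pairwise (fun i j => Disjoint (B i) (B j)) :=
      hdisj.mono (by exact_mod_cast hT)
    have h1 : ∀ ω : ι → Bool, ∏ j ∈ T, I j ω = ∏ e ∈ T.biUnion B, g e (ω e) := by
      intro ω
      rw [Finset.prod_biUnion]
      intro i hi j hj hij
      exact hdT hi hj hij
    have h2 : ∏ j ∈ T, μ j = ∏ e ∈ T.biUnion B, (p * g e true + (1 - p) * g e false) := by
      rw [Finset.prod_biUnion]
      intro i hi j hj hij
      exact hdT hi hj hij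
    rw [h2]
    rw [Finset.sum_congr rfl fun ω _ => by rw [h1 ω]]
    exact key p _ _
  have hmgf : ∑ ω : ι → Bool, W p ω * ∏ j ∈ J, (1 - c * I j ω) = ∏ j ∈ J, (1 - c * μ j) := by
    have expand : ∀ (f : κ → ℝ), ∏ j ∈ J, (1 - c * f j)
        = ∑ T ∈ J.powerset, (-c) ^ T.card * ∏ j ∈ T, f j := by
      intro f
      calc ∏ j ∈ J, (1 - c * f j) = ∏ j ∈ J, ((-c) * f j + 1) := by
            refine Finset.prod_congr rfl fun j _ => by ring
        _ = ∑ T ∈ J.powerset, (∏ j ∈ T, (-c) * f j) * ∏ j ∈ J \ T, (1:ℝ) := Finset.prod_add _ _ _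
        _ = ∑ T ∈ J.powerset, (-c) ^ T.card * ∏ j ∈ T, f j := by
            refine Finset.sum_congr rfl fun T _ => ?_
            rw [Finset.prod_mul_distrib, Finset.prod_const, Finset.prod_const_one]
            ring
    calc ∑ ω : ι → Bool, W p ω * ∏ j ∈ J, (1 - c * I j ω)
        = ∑ ω : ι → Bool, ∑ T ∈ J.powerset, W p ω * ((-c) ^ T.card * ∏ j ∈ T, I j ω) := by
          refine Finset.sum_congr rfl fun ω _ => ?_
          rw [expand (fun j => I j ω), Finset.mul_sum]
      _ = ∑ T ∈ J.powerset, (-c) ^ T.card * ∑ ω : ι → Bool, W p ω * ∏ j ∈ T, I j ω := by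
          rw [Finset.sum_comm]
          refine Finset.sum_congr rfl fun T _ => ?_
          rw [Finset.mul_sum]
          refine Finset.sum_congr rfl fun ω _ => by ring
      _ = ∑ T ∈ J.powerset, (-c) ^ T.card * ∏ j ∈ T, μ j := by
          refine Finset.sum_congr rfl fun T hT => by rw [hprodexp T hT]
      _ = ∏ j ∈ J, (1 - c * μ j) := (expand μ).symm
  have hXd : ∀ ω : ι → Bool, Real.exp (-t * ∑ j ∈ J, I j ω) = ∏ j ∈ J, (1 - c * I j ω) := by
    intro ω
    rw [Finset.mul_sum, Real.exp_sum]
    refine Finset.prod_congr rfl fun j _ => ?_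
    rcases hI01 j ω with h | h <;> rw [h] <;> simp [hc]
  have markov : ∑ ω ∈ Finset.univ.filter
        (fun ω : ι → Bool => (∑ j ∈ J, I j ω) ≤ a), W p ω
      ≤ Real.exp (t * a) * ∏ j ∈ J, (1 - c * μ j) := by
    rw [← hmgf, Finset.mul_sum]
    have step1 : ∀ ω ∈ Finset.univ.filter (fun ω : ι → Bool => (∑ j ∈ J, I j ω) ≤ a),
        W p ω ≤ Real.exp (t * a) * (W p ω * ∏ j ∈ J, (1 - c * I j ω)) := by
      intro ω hω
      rw [Finset.mem_filter] at hω
      rw [← hXd ω]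
      have h1 : (1:ℝ) ≤ Real.exp (t * a) * Real.exp (-t * ∑ j ∈ J, I j ω) := by
        rw [← Real.exp_add]
        rw [show (1:ℝ) = Real.exp 0 by simp]
        apply Real.exp_le_exp.mpr
        nlinarith [hω.2]
      calc W p ω = W p ω * 1 := by ring
        _ ≤ W p ω * (Real.exp (t * a) * Real.exp (-t * ∑ j ∈ J, I j ω)) := by
            exact mul_le_mul_of_nonneg_left h1 (W_nonneg hp0 hp1 ω)
        _ = Real.exp (t * a) * (W p ω * Real.exp (-t * ∑ j ∈ J, I j ω)) := by ring
    calc ∑ ω ∈ Finset.univ.filter (fun ω : ι → Bool => (∑ j ∈ J, I j ω) ≤ a), W p ω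
        ≤ ∑ ω ∈ Finset.univ.filter (fun ω : ι → Bool => (∑ j ∈ J, I j ω) ≤ a),
            Real.exp (t * a) * (W p ω * ∏ j ∈ J, (1 - c * I j ω)) :=
          Finset.sum_le_sum step1
      _ ≤ ∑ ω : ι → Bool, Real.exp (t * a) * (W p ω * ∏ j ∈ J, (1 - c * I j ω)) := by
          refine Finset.sum_le_sum_of_subset_of_nonneg (Finset.filter_subset _ _) ?_
          intro ω _ _
          rw [← hXd ω]
          exact mul_nonneg (Real.exp_pos _).le
            (mul_nonneg (W_nonneg hp0 hp1 ω) (Real.exp_pos _).le)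
  refine markov.trans ?_
  have final : ∏ j ∈ J, (1 - c * μ j) ≤ Real.exp (-(c * ∑ j ∈ J, μ j)) := by
    rw [Finset.mul_sum, ← Finset.sum_neg_distrib, Real.exp_sum]
    refine Finset.prod_le_prod (fun j _ => ?_) (fun j _ => ?_)
    · nlinarith [(hμ01 j).1, (hμ01 j).2]
    · have := Real.add_one_le_exp (-(c * μ j))
      linarith
  calc Real.exp (t * a) * ∏ j ∈ J, (1 - c * μ j)
      ≤ Real.exp (t * a) * Real.exp (-(c * ∑ j ∈ J, μ j)) := by
        exact mul_le_mul_of_nonneg_left final (Real.exp_pos _).le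
    _ = Real.exp (t * a - c * ∑ j ∈ J, μ j) := by rw [← Real.exp_add]; ring_nf

end core

variable {d : ℕ}

noncomputable def Gr (ω : Sym2 (Fin d) → Bool) : SimpleGraph (Fin d) :=
  SimpleGraph.fromRel (fun a b => ω s(a, b))

lemma Gr_adj (ω : Sym2 (Fin d) → Bool) (a b : Fin d) :
    (Gr ω).Adj a b ↔ a ≠ b ∧ ω s(a, b) = true := by
  simp only [Gr, SimpleGraph.fromRel_adj]
  constructor
  · rintro ⟨h, h' | h'⟩
    · exact ⟨h, h'⟩
    · exact ⟨h, by rwa [Sym2.eq_swap]⟩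
  · rintro ⟨h, h'⟩; exact ⟨h, Or.inl h'⟩

noncomputable def slots (d : ℕ) : Finset (Sym2 (Fin d)) :=
  Finset.univ.filter (fun e => ¬ e.IsDiag)

lemma card_slots : (slots d).card = d.choose 2 := by
  have := Sym2.card_subtype_not_diag (α := Fin d)
  rw [Fintype.card_subtype] at this
  simpa [slots] using this

lemma edgeSet_eq (ω : Sym2 (Fin d) → Bool) :
    (Gr ω).edgeSet = ↑((slots d).filter (fun e => ω e = true)) := by
  ext e
  induction e with
  | _ a b =>
    simp only [SimpleGraph.mem_edgeSet, Gr_adj, Finset.coe_filter, Set.mem_setOf_eq,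
      slots, Finset.mem_filter, Finset.mem_univ, true_and, Sym2.mk_isDiag_iff]

lemma ncard_edgeSet (ω : Sym2 (Fin d) → Bool) :
    (Gr ω).edgeSet.ncard = ((slots d).filter (fun e => ω e = true)).card := by
  rw [edgeSet_eq, Set.ncard_coe_finset]

noncomputable def slotsOf (P : Finset (Finset (Fin d))) : Finset (Sym2 (Fin d)) :=
  ((Finset.univ : Finset (Fin d × Fin d)).filter
    (fun x => ∃ A ∈ P, ∃ B ∈ P, A ≠ B ∧ x.1 ∈ A ∧ x.2 ∈ B)).image
    (fun x => s(x.1, x.2))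

lemma mem_slotsOf {P : Finset (Finset (Fin d))} {e : Sym2 (Fin d)} :
    e ∈ slotsOf P ↔ ∃ a b : Fin d,
      (∃ A ∈ P, ∃ B ∈ P, A ≠ B ∧ a ∈ A ∧ b ∈ B) ∧ e = s(a, b) := by
  simp only [slotsOf, Finset.mem_image, Finset.mem_filter, Finset.mem_univ, true_and,
    Prod.exists]
  constructor
  · rintro ⟨a, b, h, rfl⟩; exact ⟨a, b, h, rfl⟩
  · rintro ⟨a, b, h, rfl⟩; exact ⟨a, b, h, rfl⟩

lemma slotsOf_pair {A B : Finset (Fin d)} (hAB : A ≠ B) (hd : Disjoint A B) :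
    slotsOf {A, B} = (A ×ˢ B).image (fun x : Fin d × Fin d => s(x.1, x.2)) := by
  ext e
  rw [mem_slotsOf, Finset.mem_image]
  constructor
  · rintro ⟨a, b, ⟨A', hA', B', hB', hne, ha, hb⟩, rfl⟩
    simp only [Finset.mem_insert, Finset.mem_singleton] at hA' hB'
    rcases hA' with rfl | rfl <;> rcases hB' with rfl | rfl
    · exact absurd rfl hne
    · exact ⟨(a, b), Finset.mem_product.mpr ⟨ha, hb⟩, rfl⟩
    · exact ⟨(b, a), Finset.mem_product.mpr ⟨hb, ha⟩, by rw [Sym2.eq_swap]⟩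
    · exact absurd rfl hne
  · rintro ⟨⟨a, b⟩, hab, rfl⟩
    rw [Finset.mem_product] at hab
    exact ⟨a, b, ⟨A, by simp, B, by simp, hAB, hab.1, hab.2⟩, rfl⟩

lemma card_slotsOf_pair {A B : Finset (Fin d)} (hAB : A ≠ B) (hd : Disjoint A B) :
    (slotsOf {A, B}).card = A.card * B.card := by
  rw [slotsOf_pair hAB hd, Finset.card_image_of_injOn, Finset.card_product]
  rintro ⟨a, b⟩ hab ⟨a', b'⟩ hab' h
  rw [Finset.mem_coe, Finset.mem_product] at hab hab'
  rw [Sym2.eq_iff] at h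
  rcases h with ⟨rfl, rfl⟩ | ⟨rfl, rfl⟩
  · rfl
  · exact absurd hab'.2 (Finset.disjoint_left.mp hd hab.1)

section family
variable {S : Finset (Finset (Fin d))} (hS : (↑S : Set (Finset (Fin d))).Pairwise Disjoint)

include hS in
lemma mem_unique {x : Fin d} {A B : Finset (Fin d)} (hA : A ∈ S) (hB : B ∈ S)
    (hxA : x ∈ A) (hxB : x ∈ B) : A = B := by
  by_contra h
  exact (Finset.disjoint_left.mp (hS hA hB h) hxA) hxB

lemma eq_pair_of_mem {P : Finset (Finset (Fin d))} (hP : P.card = 2)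
    {A B : Finset (Fin d)} (hA : A ∈ P) (hB : B ∈ P) (hAB : A ≠ B) : P = {A, B} := by
  have hsub : {A, B} ⊆ P := by
    intro X hX
    rcases Finset.mem_insert.mp hX with rfl | hX
    · exact hA
    · rw [Finset.mem_singleton] at hX; subst hX; exact hB
  refine (Finset.eq_of_subset_of_card_le hsub ?_).symm
  rw [hP, Finset.card_insert_of_notMem (by simpa using hAB), Finset.card_singleton]

include hS in
lemma slotsOf_disjoint {P Q : Finset (Finset (Fin d))}
    (hP : P ∈ S.powersetCard 2) (hQ : Q ∈ S.powersetCard 2) (hPQ : P ≠ Q) :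
    Disjoint (slotsOf P) (slotsOf Q) := by
  rw [Finset.mem_powersetCard] at hP hQ
  rw [Finset.disjoint_left]
  intro e heP heQ
  rw [mem_slotsOf] at heP heQ
  obtain ⟨a, b, ⟨A, hA, B, hB, hAB, ha, hb⟩, rfl⟩ := heP
  obtain ⟨a', b', ⟨A', hA', B', hB', hAB', ha', hb'⟩, he⟩ := heQ
  have hPp : P = {A, B} := eq_pair_of_mem hP.2 hA hB hAB
  have hQp : Q = {A', B'} := eq_pair_of_mem hQ.2 hA' hB' hAB'
  have hAS := hP.1 hA
  have hBS := hP.1 hB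
  have hAS' := hQ.1 hA'
  have hBS' := hQ.1 hB'
  rw [Sym2.eq_iff] at he
  apply hPQ
  rcases he with ⟨rfl, rfl⟩ | ⟨rfl, rfl⟩
  · rw [hPp, hQp, mem_unique hS hAS hAS' ha ha', mem_unique hS hBS hBS' hb hb']
  · rw [hPp, hQp, mem_unique hS hAS hBS' ha hb', mem_unique hS hBS hAS' hb ha']
    exact Finset.pair_comm _ _

include hS in
lemma pred_iff_slots {P : Finset (Finset (Fin d))} (hP : P ∈ S.powersetCard 2)
    (ω : Sym2 (Fin d) → Bool) :
    (∀ A ∈ P, ∀ B ∈ P, A ≠ B → ∀ a ∈ A, ∀ b ∈ B, ¬ (Gr ω).Adj a b)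
      ↔ ∀ e ∈ slotsOf P, ω e = false := by
  rw [Finset.mem_powersetCard] at hP
  constructor
  · intro h e he
    rw [mem_slotsOf] at he
    obtain ⟨a, b, ⟨A, hA, B, hB, hAB, ha, hb⟩, rfl⟩ := he
    have hab : a ≠ b := by
      intro hab; subst hab
      exact (Finset.disjoint_left.mp (hS (hP.1 hA) (hP.1 hB) hAB) ha) hb
    have := h A hA B hB hAB a ha b hb
    rw [Gr_adj] at this
    push_neg at this
    simpa using this hab
  · intro h A hA B hB hAB a ha b hb
    rw [Gr_adj]
    rintro ⟨hab, habω⟩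
    have : s(a, b) ∈ slotsOf P := mem_slotsOf.mpr ⟨a, b, ⟨A, hA, B, hB, hAB, ha, hb⟩, rfl⟩
    rw [h _ this] at habω
    exact Bool.false_ne_true habω

end family

lemma prod_zero_one_indicator (s : Finset (Sym2 (Fin d))) (ω : Sym2 (Fin d) → Bool) :
    ∏ e ∈ s, (if ω e then (0:ℝ) else 1)
      = if (∀ e ∈ s, ω e = false) then 1 else 0 := by
  by_cases h : ∀ e ∈ s, ω e = false
  · rw [if_pos h]
    exact Finset.prod_eq_one fun e he => by rw [h e he]; simp
  · rw [if_neg h]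
    push_neg at h
    obtain ⟨e, he, hωe⟩ := h
    refine Finset.prod_eq_zero he ?_
    simp only [Bool.not_eq_false] at hωe
    simp [hωe]

/-- Claim A: per-family Chernoff bound. -/
lemma claimA {p α : ℝ} (hp : p ∈ Set.Ioo (0:ℝ) 1) (hα0 : 0 < α) {d : ℕ} (hd1 : 1 ≤ d)
    {S : Finset (Finset (Fin d))} (hS : (↑S : Set (Finset (Fin d))).Pairwise Disjoint)
    (hmem : ∀ A ∈ S, A.Nonempty ∧
      (A.card : ℝ) ≤ Real.sqrt (α * (Real.log d / Real.log (1-p)⁻¹))) :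
    ∑ ω ∈ Finset.univ.filter (fun ω : Sym2 (Fin d) → Bool =>
        (∑ P ∈ S.powersetCard 2, ∏ e ∈ slotsOf P, (if ω e then (0:ℝ) else 1))
          ≤ (1/2) * (d:ℝ)^(-α) * ((S.card.choose 2 : ℕ) : ℝ)), W p ω
      ≤ Real.exp (-(1/8) * ((d:ℝ)^(-α) * ((S.card.choose 2 : ℕ) : ℝ))) := by
  obtain ⟨hp0, hp1⟩ := hp
  have hq0 : (0:ℝ) < 1 - p := by linarith
  have hq1 : 1 - p < 1 := by linarith
  have hb1 : 1 < (1-p)⁻¹ := (one_lt_inv₀ hq0).mpr hq1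
  have hlogb : 0 < Real.log (1-p)⁻¹ := Real.log_pos hb1
  have hd0R : (0:ℝ) < d := by exact_mod_cast Nat.lt_of_lt_of_le Nat.zero_lt_one hd1
  have hlogd : 0 ≤ Real.log d := Real.log_nonneg (by exact_mod_cast hd1)
  set ℓ2 : ℝ := α * (Real.log d / Real.log (1-p)⁻¹) with hℓ2def
  have hℓ2 : 0 ≤ ℓ2 := by positivity
  have hdα : (d:ℝ)^(-α) = (1-p) ^ ℓ2 := by
    rw [Real.rpow_def_of_pos hq0, Real.rpow_def_of_pos hd0R]
    congr 1
    have hlq : Real.log (1-p) = - Real.log (1-p)⁻¹ := by rw [Real.log_inv]; ring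
    rw [hℓ2def, hlq]
    have hinv : Real.log (1-p)⁻¹ * (Real.log (1-p)⁻¹)⁻¹ = 1 := mul_inv_cancel₀ hlogb.ne'
    rw [div_eq_mul_inv]
    linear_combination (α * Real.log d) * hinv
  set g : Sym2 (Fin d) → Bool → ℝ := fun _ b => if b then (0:ℝ) else 1 with hgdef
  have hg : ∀ e b, g e b = 0 ∨ g e b = 1 := by
    intro e b; cases b <;> simp [hgdef]
  set aS : ℝ := (1/2) * (d:ℝ)^(-α) * ((S.card.choose 2 : ℕ) : ℝ) with haSdef
  have haS0 : 0 ≤ aS := by positivity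
  have hch := chernoff hp0.le hp1.le (S.powersetCard 2) slotsOf
    (fun P hP Q hQ hPQ => slotsOf_disjoint hS hP hQ hPQ) g hg
    (Real.log 2) aS (Real.log_nonneg one_le_two)
  refine hch.trans ?_
  rw [Real.exp_le_exp]
  have hc : 1 - Real.exp (-Real.log 2) = 1/2 := by
    rw [Real.exp_neg, Real.exp_log (by norm_num : (0:ℝ) < 2)]
    norm_num
  -- each μ_P is at least d^(-α)
  have hμP : ∀ P ∈ S.powersetCard 2,
      (d:ℝ)^(-α) ≤ ∏ e ∈ slotsOf P, (p * g e true + (1 - p) * g e false) := by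
    intro P hP
    have hval : ∀ e : Sym2 (Fin d), p * g e true + (1 - p) * g e false = 1 - p := by
      intro e; simp [hgdef]
    rw [Finset.prod_congr rfl fun e _ => hval e, Finset.prod_const]
    obtain ⟨hPS, hP2⟩ := Finset.mem_powersetCard.mp hP
    obtain ⟨A, B, hAB, rfl⟩ := Finset.card_eq_two.mp hP2
    have hA : A ∈ S := hPS (by simp)
    have hB : B ∈ S := hPS (by simp)
    have hdAB : Disjoint A B := hS hA hB hAB
    rw [card_slotsOf_pair hAB hdAB]
    have hcardle : ((A.card * B.card : ℕ) : ℝ) ≤ ℓ2 := by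
      push_cast
      calc (A.card : ℝ) * (B.card : ℝ)
          ≤ Real.sqrt ℓ2 * Real.sqrt ℓ2 := by
            refine mul_le_mul (hmem A hA).2 (hmem B hB).2 (by positivity) (Real.sqrt_nonneg _)
        _ = ℓ2 := Real.mul_self_sqrt hℓ2
    calc (d:ℝ)^(-α) = (1-p) ^ ℓ2 := hdα
      _ ≤ (1-p) ^ ((A.card * B.card : ℕ) : ℝ) :=
          Real.rpow_le_rpow_of_exponent_ge hq0 hq1.le hcardle
      _ = (1-p) ^ (A.card * B.card) := by rw [Real.rpow_natCast]
  have hsum : ((S.card.choose 2 : ℕ) : ℝ) * (d:ℝ)^(-α)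
      ≤ ∑ P ∈ S.powersetCard 2, ∏ e ∈ slotsOf P, (p * g e true + (1 - p) * g e false) := by
    have := Finset.card_nsmul_le_sum (S.powersetCard 2)
      (fun P => ∏ e ∈ slotsOf P, (p * g e true + (1 - p) * g e false)) ((d:ℝ)^(-α)) hμP
    rwa [Finset.card_powersetCard, nsmul_eq_mul] at this
  rw [hc]
  have hlog2 : Real.log 2 ≤ 3/4 := by
    have := Real.log_two_lt_d9
    linarith
  have h2aS : 2 * aS = ((S.card.choose 2 : ℕ) : ℝ) * (d:ℝ)^(-α) := by
    rw [haSdef]; ring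
  nlinarith [hsum, haS0]

/-- Claim B: edge-count Chernoff bound. -/
lemma claimB {p ε : ℝ} (hp : p ∈ Set.Ioo (0:ℝ) 1) (hε : ε ∈ Set.Ioo (0:ℝ) 1) (d : ℕ) :
    ∑ ω ∈ Finset.univ.filter (fun ω : Sym2 (Fin d) → Bool =>
        (∑ e ∈ slots d, ∏ e' ∈ ({e} : Finset (Sym2 (Fin d))), (if ω e' then (1:ℝ) else 0))
          ≤ (1/2 - ε) * p * (d:ℝ)^2), W p ω
      ≤ Real.exp (Real.log (1-ε)⁻¹ * ((1/2 - ε) * p * (d:ℝ)^2)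
          - ε * (((d.choose 2 : ℕ):ℝ) * p)) := by
  obtain ⟨hp0, hp1⟩ := hp
  obtain ⟨hε0, hε1⟩ := hε
  have h1ε : (0:ℝ) < 1 - ε := by linarith
  set g : Sym2 (Fin d) → Bool → ℝ := fun _ b => if b then (1:ℝ) else 0 with hgdef
  have hg : ∀ e b, g e b = 0 ∨ g e b = 1 := by
    intro e b; cases b <;> simp [hgdef]
  have ht0 : 0 ≤ Real.log (1-ε)⁻¹ :=
    Real.log_nonneg ((one_le_inv₀ h1ε).mpr (by linarith))
  have hch := chernoff hp0.le hp1.le (slots d) (fun e => {e})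
    (fun i _ j _ hij => by simp [Finset.disjoint_singleton]; exact fun h => hij h) g hg
    (Real.log (1-ε)⁻¹) ((1/2 - ε) * p * (d:ℝ)^2) ht0
  refine hch.trans ?_
  rw [Real.exp_le_exp]
  have hcε : 1 - Real.exp (-Real.log (1-ε)⁻¹) = ε := by
    rw [show -Real.log (1-ε)⁻¹ = Real.log (1-ε) by rw [Real.log_inv]; ring,
      Real.exp_log h1ε]
    ring
  have hμ : ∀ e ∈ slots d, ∏ e' ∈ ({e} : Finset (Sym2 (Fin d))),
      (p * g e' true + (1 - p) * g e' false) = p := by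
    intro e _
    rw [Finset.prod_singleton]
    simp [hgdef]
  rw [Finset.sum_congr rfl hμ, Finset.sum_const, card_slots, nsmul_eq_mul, hcε]


/-- Main lemma for fixed (large enough) d. -/
lemma main_fixed {p ε α β : ℝ}
    (hp : p ∈ Set.Ioo (0:ℝ) 1) (hε : ε ∈ Set.Ioo (0:ℝ) 1)
    (hα : α ∈ Set.Ioo (0:ℝ) 1) (hβ : β ∈ Set.Ioo α 1) {d : ℕ} (hd1 : 1 ≤ d)
    (HE : Real.exp (Real.log (1-ε)⁻¹ * ((1/2 - ε) * p * (d:ℝ)^2)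
        - ε * (((d.choose 2 : ℕ):ℝ) * p)) ≤ 1/4)
    (HF : ((((⌊Real.sqrt (α * (Real.log d / Real.log (1-p)⁻¹))⌋₊ + 1)
          * d ^ ⌊Real.sqrt (α * (Real.log d / Real.log (1-p)⁻¹))⌋₊) ^ ⌈(d:ℝ)^β⌉₊ : ℕ) : ℝ)
        * Real.exp (-(1/8) * ((d:ℝ)^(-α) * ((⌈(d:ℝ)^β⌉₊.choose 2 : ℕ) : ℝ))) ≤ 1/4) :
    ∃ G : SimpleGraph (Fin d),
      (1 / 2 - ε) * p * (d : ℝ) ^ 2 < (G.edgeSet.ncard : ℝ) ∧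
      ∀ S : Finset (Finset (Fin d)),
        S.card = ⌈(d : ℝ) ^ β⌉₊ →
        (∀ A ∈ S, A.Nonempty ∧
          (A.card : ℝ) ≤ Real.sqrt (α * (Real.log d / Real.log (1 - p)⁻¹))) →
        (S : Set (Finset (Fin d))).Pairwise Disjoint →
        (1 / 2) * (d : ℝ) ^ (-α) * ((⌈(d : ℝ) ^ β⌉₊).choose 2 : ℝ) <
          (((S.powersetCard 2).filter fun P =>
            ∀ A ∈ P, ∀ B ∈ P, A ≠ B → ∀ a ∈ A, ∀ b ∈ B, ¬ G.Adj a b).card : ℝ) := by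
  set ℓR : ℝ := Real.sqrt (α * (Real.log d / Real.log (1-p)⁻¹)) with hℓR
  set sN : ℕ := ⌈(d:ℝ)^β⌉₊ with hsN
  set L : ℕ := ⌊ℓR⌋₊ with hLdef
  set 𝒜 : Finset (Finset (Fin d)) :=
    Finset.univ.filter (fun A : Finset (Fin d) => A.Nonempty ∧ (A.card:ℝ) ≤ ℓR) with h𝒜
  set V : Finset (Finset (Finset (Fin d))) :=
    (𝒜.powersetCard sN).filter
      (fun T => (↑T : Set (Finset (Fin d))).Pairwise Disjoint) with hVdef
  set aS : ℝ := (1/2) * (d:ℝ)^(-α) * ((sN.choose 2 : ℕ):ℝ) with haS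
  set a0 : ℝ := (1/2 - ε) * p * (d:ℝ)^2 with ha0
  set X0 : (Sym2 (Fin d) → Bool) → ℝ := fun ω => ∑ e ∈ slots d,
    ∏ e' ∈ ({e} : Finset (Sym2 (Fin d))), (if ω e' then (1:ℝ) else 0) with hX0
  set XS : Finset (Finset (Fin d)) → (Sym2 (Fin d) → Bool) → ℝ := fun T ω =>
    ∑ P ∈ T.powersetCard 2, ∏ e ∈ slotsOf P, (if ω e then (0:ℝ) else 1) with hXS
  -- counting the families
  have h𝒜card : 𝒜.card ≤ (L+1) * d^L := by
    have hsub : 𝒜 ⊆ (Finset.range (L+1)).biUnion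
        (fun k => Finset.univ.powersetCard k) := by
      intro A hA
      rw [h𝒜, Finset.mem_filter] at hA
      rw [Finset.mem_biUnion]
      refine ⟨A.card, Finset.mem_range.mpr (Nat.lt_succ_of_le (Nat.le_floor hA.2.2)), ?_⟩
      rw [Finset.mem_powersetCard]
      exact ⟨Finset.subset_univ _, rfl⟩
    calc 𝒜.card ≤ _ := Finset.card_le_card hsub
      _ ≤ ∑ k ∈ Finset.range (L+1), (Finset.univ.powersetCard k).card :=
          Finset.card_biUnion_le
      _ ≤ ∑ k ∈ Finset.range (L+1), d^L := by
          refine Finset.sum_le_sum fun k hk => ?_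
          rw [Finset.card_powersetCard, Finset.card_univ, Fintype.card_fin]
          calc d.choose k ≤ d^k := Nat.choose_le_pow d k
            _ ≤ d^L := Nat.pow_le_pow_right hd1 (Nat.lt_succ_iff.mp (Finset.mem_range.mp hk))
      _ = (L+1) * d^L := by rw [Finset.sum_const, Finset.card_range, smul_eq_mul]
  have hVcard : V.card ≤ ((L+1) * d^L)^sN :=
    calc V.card ≤ (𝒜.powersetCard sN).card := Finset.card_le_card (Finset.filter_subset _ _)
      _ = 𝒜.card.choose sN := Finset.card_powersetCard _ _
      _ ≤ 𝒜.card ^ sN := Nat.choose_le_pow _ _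
      _ ≤ ((L+1) * d^L)^sN := Nat.pow_le_pow_left h𝒜card sN
  -- existence of a good ω
  have hgood : ∃ ω : Sym2 (Fin d) → Bool, a0 < X0 ω ∧ ∀ T ∈ V, aS < XS T ω := by
    by_contra hcon
    push_neg at hcon
    have cover : ∀ ω : Sym2 (Fin d) → Bool,
        (1:ℝ) ≤ (if X0 ω ≤ a0 then (1:ℝ) else 0)
          + ∑ T ∈ V, (if XS T ω ≤ aS then (1:ℝ) else 0) := by
      intro ω
      have hnn : (0:ℝ) ≤ ∑ T ∈ V, (if XS T ω ≤ aS then (1:ℝ) else 0) :=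
        Finset.sum_nonneg fun T _ => by split <;> norm_num
      by_cases h : X0 ω ≤ a0
      · rw [if_pos h]; linarith
      · obtain ⟨T, hT, hTa⟩ := hcon ω (lt_of_not_ge h)
        have h2 : (1:ℝ) ≤ ∑ T ∈ V, (if XS T ω ≤ aS then (1:ℝ) else 0) := by
          have := Finset.single_le_sum
            (f := fun T => if XS T ω ≤ aS then (1:ℝ) else 0)
            (fun i _ => by split <;> norm_num) hT
          rwa [if_pos hTa] at this
        have h3 : (0:ℝ) ≤ if X0 ω ≤ a0 then (1:ℝ) else 0 := by split <;> norm_num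
        linarith
    obtain ⟨hp0, hp1⟩ := hp
    have hPB := (claimB ⟨hp0, hp1⟩ hε d).trans HE
    have hPA : ∀ T ∈ V, (∑ ω ∈ Finset.univ.filter
        (fun ω : Sym2 (Fin d) → Bool => XS T ω ≤ aS), W p ω)
          ≤ Real.exp (-(1/8) * ((d:ℝ)^(-α) * ((sN.choose 2 : ℕ) : ℝ))) := by
      intro T hT
      rw [hVdef, Finset.mem_filter, Finset.mem_powersetCard] at hT
      obtain ⟨⟨hT𝒜, hTcard⟩, hTdisj⟩ := hT
      have hmemT : ∀ A ∈ T, A.Nonempty ∧ (A.card : ℝ) ≤ ℓR := by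
        intro A hA
        have := hT𝒜 hA
        rw [h𝒜, Finset.mem_filter] at this
        exact this.2
      have := claimA ⟨hp0, hp1⟩ hα.1 hd1 hTdisj hmemT
      rw [hTcard] at this
      exact this
    have h1 : (1:ℝ) = ∑ ω : Sym2 (Fin d) → Bool, W p ω := (sum_W p).symm
    have h2 : ∑ ω : Sym2 (Fin d) → Bool, W p ω
        ≤ ∑ ω : Sym2 (Fin d) → Bool, W p ω * ((if X0 ω ≤ a0 then (1:ℝ) else 0)
            + ∑ T ∈ V, (if XS T ω ≤ aS then (1:ℝ) else 0)) := by
      refine Finset.sum_le_sum fun ω _ => ?_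
      calc W p ω = W p ω * 1 := by ring
        _ ≤ _ := mul_le_mul_of_nonneg_left (cover ω) (W_nonneg hp0.le hp1.le ω)
    have h3 : ∑ ω : Sym2 (Fin d) → Bool, W p ω * ((if X0 ω ≤ a0 then (1:ℝ) else 0)
            + ∑ T ∈ V, (if XS T ω ≤ aS then (1:ℝ) else 0))
        = (∑ ω ∈ Finset.univ.filter (fun ω : Sym2 (Fin d) → Bool => X0 ω ≤ a0), W p ω)
          + ∑ T ∈ V, ∑ ω ∈ Finset.univ.filter
              (fun ω : Sym2 (Fin d) → Bool => XS T ω ≤ aS), W p ω := by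
      simp only [mul_add]
      rw [Finset.sum_add_distrib]
      congr 1
      · rw [Finset.sum_filter]
        exact Finset.sum_congr rfl fun ω _ => by rw [mul_ite, mul_one, mul_zero]
      · calc ∑ ω : Sym2 (Fin d) → Bool,
              W p ω * ∑ T ∈ V, (if XS T ω ≤ aS then (1:ℝ) else 0)
            = ∑ ω : Sym2 (Fin d) → Bool,
                ∑ T ∈ V, W p ω * (if XS T ω ≤ aS then (1:ℝ) else 0) :=
              Finset.sum_congr rfl fun ω _ => Finset.mul_sum _ _ _
          _ = ∑ T ∈ V, ∑ ω : Sym2 (Fin d) → Bool,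
                W p ω * (if XS T ω ≤ aS then (1:ℝ) else 0) := Finset.sum_comm
          _ = ∑ T ∈ V, ∑ ω ∈ Finset.univ.filter
                (fun ω : Sym2 (Fin d) → Bool => XS T ω ≤ aS), W p ω := by
              refine Finset.sum_congr rfl fun T _ => ?_
              rw [Finset.sum_filter]
              exact Finset.sum_congr rfl fun ω _ => by rw [mul_ite, mul_one, mul_zero]
    have h4 : ∑ T ∈ V, ∑ ω ∈ Finset.univ.filter
          (fun ω : Sym2 (Fin d) → Bool => XS T ω ≤ aS), W p ω
        ≤ ((((L+1) * d^L)^sN : ℕ) : ℝ)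
            * Real.exp (-(1/8) * ((d:ℝ)^(-α) * ((sN.choose 2 : ℕ) : ℝ))) := by
      calc ∑ T ∈ V, ∑ ω ∈ Finset.univ.filter
            (fun ω : Sym2 (Fin d) → Bool => XS T ω ≤ aS), W p ω
          ≤ ∑ _T ∈ V, Real.exp (-(1/8) * ((d:ℝ)^(-α) * ((sN.choose 2 : ℕ) : ℝ))) :=
            Finset.sum_le_sum hPA
        _ = (V.card : ℝ) * Real.exp (-(1/8) * ((d:ℝ)^(-α) * ((sN.choose 2 : ℕ) : ℝ))) := by
            rw [Finset.sum_const, nsmul_eq_mul]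
        _ ≤ _ := by
            refine mul_le_mul_of_nonneg_right ?_ (Real.exp_pos _).le
            exact_mod_cast hVcard
    have hfinal : (1:ℝ) ≤ 1/4 + 1/4 := by
      calc (1:ℝ) = ∑ ω : Sym2 (Fin d) → Bool, W p ω := h1
        _ ≤ _ := h2
        _ = _ := h3
        _ ≤ 1/4 + 1/4 := add_le_add hPB (h4.trans HF)
    norm_num at hfinal
  obtain ⟨ω, hω0, hωS⟩ := hgood
  refine ⟨Gr ω, ?_, ?_⟩
  · -- edge count
    have hX0eq : X0 ω = (((slots d).filter (fun e => ω e = true)).card : ℝ) := by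
      simp only [hX0, Finset.prod_singleton]
      rw [Finset.sum_boole]
    rw [ncard_edgeSet]
    exact hX0eq ▸ hω0
  · intro S hcard hsizes hdisj
    have hSV : S ∈ V := by
      rw [hVdef, Finset.mem_filter, Finset.mem_powersetCard]
      refine ⟨⟨?_, hcard⟩, hdisj⟩
      intro A hA
      rw [h𝒜, Finset.mem_filter]
      exact ⟨Finset.mem_univ _, hsizes A hA⟩
    have hXSeq : XS S ω = (((S.powersetCard 2).filter fun P =>
        ∀ A ∈ P, ∀ B ∈ P, A ≠ B → ∀ a ∈ A, ∀ b ∈ B, ¬ (Gr ω).Adj a b).card : ℝ) := by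
      simp only [hXS]
      rw [Finset.sum_congr rfl fun P _ => prod_zero_one_indicator (slotsOf P) ω]
      rw [Finset.card_filter]
      push_cast
      refine Finset.sum_congr rfl fun P hP => ?_
      have hiff := pred_iff_slots hdisj hP ω
      by_cases h : ∀ e ∈ slotsOf P, ω e = false
      · rw [if_pos h, if_pos (hiff.mpr h)]
      · rw [if_neg h, if_neg (fun hc => h (hiff.mp hc))]
    exact hXSeq ▸ hωS S hSV



open Filter in
lemma gen_ev {C K c θ' θ : ℝ} (hc : 0 < c) (hθ' : 0 ≤ θ') (h : θ' < θ) :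
    ∀ᶠ x : ℝ in Filter.atTop, C * x^θ' + K ≤ c * x^θ := by
  have h1 : ∀ᶠ x : ℝ in atTop, (|C| + |K|)/c ≤ x^(θ-θ') :=
    (tendsto_rpow_atTop (by linarith)).eventually_ge_atTop _
  filter_upwards [h1, Filter.eventually_ge_atTop 1] with x hx hx1
  have hx0 : (0:ℝ) < x := by linarith
  have hxθ' : (1:ℝ) ≤ x^θ' := by
    have := Real.rpow_le_rpow_of_exponent_le hx1 hθ'
    rwa [Real.rpow_zero] at this
  have hxθ'0 : (0:ℝ) ≤ x^θ' := by positivity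
  have hCK : (|C| + |K|) ≤ c * x^(θ-θ') := by
    rw [div_le_iff₀ hc] at hx
    linarith [hx]
  calc C * x^θ' + K ≤ |C| * x^θ' + |K| * x^θ' := by
        have h1' : C * x^θ' ≤ |C| * x^θ' :=
          mul_le_mul_of_nonneg_right (le_abs_self C) hxθ'0
        have h2' : K ≤ |K| * x^θ' := by
          calc K ≤ |K| := le_abs_self K
            _ = |K| * 1 := by ring
            _ ≤ |K| * x^θ' := mul_le_mul_of_nonneg_left hxθ' (abs_nonneg K)
        linarith
    _ = (|C| + |K|) * x^θ' := by ring
    _ ≤ (c * x^(θ-θ')) * x^θ' := mul_le_mul_of_nonneg_right hCK hxθ'0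
    _ = c * (x^(θ-θ') * x^θ') := by ring
    _ = c * x^θ := by rw [← Real.rpow_add hx0]; ring_nf

lemma log_le_rpow_div {x δ : ℝ} (hx : 1 ≤ x) (hδ : 0 < δ) :
    Real.log x ≤ x^δ / δ := by
  have hx0 : (0:ℝ) < x := by linarith
  have h := Real.log_le_sub_one_of_pos (Real.rpow_pos_of_pos hx0 δ)
  rw [Real.log_rpow hx0] at h
  rw [le_div_iff₀ hδ]
  nlinarith [Real.rpow_pos_of_pos hx0 δ]

lemma deriveHE {p ε : ℝ} (hp : p ∈ Set.Ioo (0:ℝ) 1) (hε : ε ∈ Set.Ioo (0:ℝ) 1)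
    (d : ℕ)
    (hx : ε*p/2 * (d:ℝ) + Real.log 4 ≤ ε^2*p/2 * (d:ℝ)^2) :
    Real.exp (Real.log (1-ε)⁻¹ * ((1/2 - ε) * p * (d:ℝ)^2)
        - ε * (((d.choose 2 : ℕ):ℝ) * p)) ≤ 1/4 := by
  obtain ⟨hp0, hp1⟩ := hp
  obtain ⟨hε0, hε1⟩ := hε
  have h1ε : (0:ℝ) < 1 - ε := by linarith
  set x : ℝ := (d:ℝ) with hxdef
  have hx0 : (0:ℝ) ≤ x := Nat.cast_nonneg d
  set t₀ : ℝ := Real.log (1-ε)⁻¹ with ht₀def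
  have ht0 : 0 ≤ t₀ := Real.log_nonneg ((one_le_inv₀ h1ε).mpr (by linarith))
  have ht : t₀ * (1-ε) ≤ ε := by
    have h' := Real.log_le_sub_one_of_pos (inv_pos.mpr h1ε)
    have h'' := mul_le_mul_of_nonneg_right h' h1ε.le
    have hkey : ((1-ε)⁻¹ - 1)*(1-ε) = ε := by field_simp; ring
    rw [hkey] at h''
    exact h''
  have claim1 : t₀ * (1/2 - ε) ≤ ε*(1-ε)/2 := by
    rcases le_or_gt ε (1/2) with h | h
    · have e1 : t₀*(1-ε)*((1-ε)/2) ≤ ε*((1-ε)/2) :=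
        mul_le_mul_of_nonneg_right ht (by linarith)
      have e2 : t₀*(1/2-ε) ≤ t₀*((1-ε)^2/2) :=
        mul_le_mul_of_nonneg_left (by nlinarith) ht0
      nlinarith
    · nlinarith
  have hC2 : ((d.choose 2 : ℕ):ℝ) = x * (x - 1) / 2 := by
    rw [Nat.cast_choose_two]
  have hpx2 : (0:ℝ) ≤ p * x^2 := by positivity
  have e3 : t₀ * ((1/2 - ε) * p * x^2) ≤ (ε*(1-ε)/2) * (p * x^2) := by
    calc t₀ * ((1/2 - ε) * p * x^2) = (t₀ * (1/2-ε)) * (p * x^2) := by ring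
      _ ≤ (ε*(1-ε)/2) * (p * x^2) := mul_le_mul_of_nonneg_right claim1 hpx2
  have hexp : t₀ * ((1/2 - ε) * p * x^2) - ε * (((d.choose 2 : ℕ):ℝ) * p)
      ≤ Real.log (1/4) := by
    rw [hC2]
    have hlog4 : Real.log (1/4) = - Real.log 4 := by
      rw [one_div, Real.log_inv]
    rw [hlog4]
    nlinarith [e3, hx]
  calc Real.exp _ ≤ Real.exp (Real.log (1/4)) := Real.exp_le_exp.mpr hexp
    _ = 1/4 := Real.exp_log (by norm_num)


lemma deriveHF {p α β : ℝ} (hp : p ∈ Set.Ioo (0:ℝ) 1) (hα : α ∈ Set.Ioo (0:ℝ) 1)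
    (hβ : β ∈ Set.Ioo α 1) (d : ℕ) (h3 : 3 ≤ d) (h2 : (2:ℝ) ≤ (d:ℝ)^β)
    (hx : 2*(d:ℝ)^β * ((Real.sqrt (Real.log d / Real.log (1-p)⁻¹) + 1) * (2 * Real.log d))
        + Real.log 4 ≤ (1/32) * (d:ℝ)^(2*β-α)) :
    ((((⌊Real.sqrt (α * (Real.log d / Real.log (1-p)⁻¹))⌋₊ + 1)
          * d ^ ⌊Real.sqrt (α * (Real.log d / Real.log (1-p)⁻¹))⌋₊) ^ ⌈(d:ℝ)^β⌉₊ : ℕ) : ℝ)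
        * Real.exp (-(1/8) * ((d:ℝ)^(-α) * ((⌈(d:ℝ)^β⌉₊.choose 2 : ℕ) : ℝ))) ≤ 1/4 := by
  obtain ⟨hp0, hp1⟩ := hp
  have hq0 : (0:ℝ) < 1 - p := by linarith
  have hx3 : (3:ℝ) ≤ (d:ℝ) := by exact_mod_cast h3
  have hx0 : (0:ℝ) < (d:ℝ) := by linarith
  have hx1 : (1:ℝ) ≤ (d:ℝ) := by linarith
  have hlog1 : (1:ℝ) ≤ Real.log d := by
    rw [Real.le_log_iff_exp_le hx0]
    calc Real.exp 1 ≤ 2.7182818286 := Real.exp_one_lt_d9.le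
      _ ≤ (3:ℝ) := by norm_num
      _ ≤ (d:ℝ) := hx3
  have hlogpos : (0:ℝ) < Real.log d := by linarith
  have hLb : (0:ℝ) < Real.log (1-p)⁻¹ :=
    Real.log_pos ((one_lt_inv₀ hq0).mpr (by linarith))
  set Lb : ℝ := Real.log (1-p)⁻¹ with hLbdef
  set ℓR : ℝ := Real.sqrt (α * (Real.log d / Lb)) with hℓRdef
  set R : ℝ := Real.sqrt (Real.log d / Lb) with hRdef
  set L : ℕ := ⌊ℓR⌋₊ with hLdef
  set sN : ℕ := ⌈(d:ℝ)^β⌉₊ with hsNdef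
  have hratio : (0:ℝ) ≤ Real.log d / Lb := by positivity
  have hRℓ : ℓR ≤ R := by
    rw [hℓRdef, hRdef]
    apply Real.sqrt_le_sqrt
    nlinarith [hα.2.le, hratio]
  have hℓR0 : 0 ≤ ℓR := Real.sqrt_nonneg _
  have hfl : (L:ℝ) ≤ ℓR := Nat.floor_le hℓR0
  -- step 1-3 : (L+1) * d^L ≤ exp (ℓR * (2 log d))
  have step1 : ((L:ℝ)+1) ≤ Real.exp ℓR :=
    (Real.add_one_le_exp (L:ℝ)).trans (Real.exp_le_exp.mpr hfl)
  have step2 : (d:ℝ)^(L:ℕ) ≤ Real.exp (ℓR * Real.log d) := by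
    rw [← Real.rpow_natCast (d:ℝ) L, Real.rpow_def_of_pos hx0]
    apply Real.exp_le_exp.mpr
    nlinarith [hfl, hlogpos]
  have step3 : ((L:ℝ)+1) * (d:ℝ)^(L:ℕ) ≤ Real.exp (ℓR * (2 * Real.log d)) := by
    calc ((L:ℝ)+1) * (d:ℝ)^(L:ℕ)
        ≤ Real.exp ℓR * Real.exp (ℓR * Real.log d) := by
          refine mul_le_mul step1 step2 (by positivity) (Real.exp_pos _).le
      _ = Real.exp (ℓR + ℓR * Real.log d) := (Real.exp_add _ _).symm
      _ ≤ Real.exp (ℓR * (2 * Real.log d)) := by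
          apply Real.exp_le_exp.mpr
          nlinarith [hℓR0, hlog1]
  have hsN2 : (sN:ℝ) ≤ 2*(d:ℝ)^β := by
    have hceil : (sN:ℝ) < (d:ℝ)^β + 1 := Nat.ceil_lt_add_one (by positivity)
    nlinarith [h2]
  set T : ℝ := 2*(d:ℝ)^β * ((R + 1) * (2 * Real.log d)) with hTdef
  have step5 : ((((L + 1) * d ^ L) ^ sN : ℕ) : ℝ) ≤ Real.exp T := by
    have hc : ((((L + 1) * d ^ L) ^ sN : ℕ) : ℝ) = (((L:ℝ)+1) * (d:ℝ)^(L:ℕ))^sN := by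
      push_cast; ring
    rw [hc]
    calc (((L:ℝ)+1) * (d:ℝ)^(L:ℕ))^sN
        ≤ (Real.exp (ℓR * (2 * Real.log d)))^sN := by
          refine pow_le_pow_left₀ (by positivity) step3 sN
      _ = Real.exp ((sN:ℝ) * (ℓR * (2 * Real.log d))) := by
          rw [← Real.exp_nat_mul]
      _ ≤ Real.exp T := by
          apply Real.exp_le_exp.mpr
          rw [hTdef]
          have h1' : ℓR * (2 * Real.log d) ≤ (R+1) * (2 * Real.log d) := by
            refine mul_le_mul_of_nonneg_right ?_ (by positivity)
            linarith [hRℓ]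
          have h2' : (0:ℝ) ≤ ℓR * (2 * Real.log d) := by positivity
          exact mul_le_mul hsN2 h1' h2' (by positivity)
  -- step 7 : binomial lower bound
  have hceil2 : (d:ℝ)^β ≤ (sN:ℝ) := Nat.le_ceil _
  have hC : ((sN.choose 2 : ℕ) : ℝ) = (sN:ℝ) * ((sN:ℝ) - 1) / 2 := by exact Nat.cast_choose_two _ sN
  have hxx : (d:ℝ)^β * (d:ℝ)^β = (d:ℝ)^(2*β) := by
    rw [← Real.rpow_add hx0]; ring_nf
  have step7 : (d:ℝ)^(2*β) / 4 ≤ ((sN.choose 2 : ℕ) : ℝ) := by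
    rw [hC, ← hxx]
    nlinarith [hceil2, h2]
  have hxα : (0:ℝ) < (d:ℝ)^(-α) := Real.rpow_pos_of_pos hx0 _
  have step8 : (1/32) * (d:ℝ)^(2*β-α) ≤ (1/8) * ((d:ℝ)^(-α) * ((sN.choose 2 : ℕ) : ℝ)) := by
    have hsplit : (d:ℝ)^(2*β-α) = (d:ℝ)^(2*β) * (d:ℝ)^(-α) := by
      rw [← Real.rpow_add hx0]; ring_nf
    rw [hsplit]
    nlinarith [step7, hxα]
  calc ((((L + 1) * d ^ L) ^ sN : ℕ) : ℝ)
          * Real.exp (-(1/8) * ((d:ℝ)^(-α) * ((sN.choose 2 : ℕ) : ℝ)))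
      ≤ Real.exp T * Real.exp (-(1/8) * ((d:ℝ)^(-α) * ((sN.choose 2 : ℕ) : ℝ))) :=
        mul_le_mul_of_nonneg_right step5 (Real.exp_pos _).le
    _ = Real.exp (T + -(1/8) * ((d:ℝ)^(-α) * ((sN.choose 2 : ℕ) : ℝ))) :=
        (Real.exp_add _ _).symm
    _ ≤ Real.exp (Real.log (1/4)) := by
        apply Real.exp_le_exp.mpr
        have hlog4 : Real.log (1/4) = - Real.log 4 := by rw [one_div, Real.log_inv]
        rw [hlog4]
        linarith [hx, step8]
    _ = 1/4 := Real.exp_log (by norm_num)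


open Filter in
lemma eventuallyE3 {p ε : ℝ} (hp : p ∈ Set.Ioo (0:ℝ) 1) (hε : ε ∈ Set.Ioo (0:ℝ) 1) :
    ∀ᶠ d : ℕ in atTop, ε*p/2 * (d:ℝ) + Real.log 4 ≤ ε^2*p/2 * (d:ℝ)^2 := by
  have hc : (0:ℝ) < ε^2*p/2 := by
    have := mul_pos (mul_pos hε.1 hε.1) hp.1
    nlinarith
  have hER := gen_ev (C := ε*p/2) (K := Real.log 4) hc
    (by norm_num : (0:ℝ) ≤ 1) (by norm_num : (1:ℝ) < 2)
  have hER' := tendsto_natCast_atTop_atTop.eventually hER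
  filter_upwards [hER'] with d hd
  rw [Real.rpow_one, show ((2:ℝ)) = ((2:ℕ):ℝ) by norm_num, Real.rpow_natCast] at hd
  exact hd

open Filter in
lemma eventuallyE4 {p α β : ℝ} (hp : p ∈ Set.Ioo (0:ℝ) 1) (hα : α ∈ Set.Ioo (0:ℝ) 1)
    (hβ : β ∈ Set.Ioo α 1) :
    ∀ᶠ d : ℕ in atTop,
      2*(d:ℝ)^β * ((Real.sqrt (Real.log d / Real.log (1-p)⁻¹) + 1) * (2 * Real.log d))
        + Real.log 4 ≤ (1/32) * (d:ℝ)^(2*β-α) := by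
  have hq0 : (0:ℝ) < 1 - p := by linarith [hp.2]
  have hLb : (0:ℝ) < Real.log (1-p)⁻¹ :=
    Real.log_pos ((one_lt_inv₀ hq0).mpr (by linarith [hp.1]))
  set Lb : ℝ := Real.log (1-p)⁻¹ with hLbdef
  set γ : ℝ := β - α with hγdef
  have hγ0 : (0:ℝ) < γ := by rw [hγdef]; linarith [hβ.1]
  have hβ0 : (0:ℝ) < β := lt_trans hα.1 hβ.1
  set c₁ : ℝ := Real.sqrt (2/(γ*Lb)) with hc₁def
  have hc₁0 : 0 ≤ c₁ := Real.sqrt_nonneg _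
  have hθ' : (0:ℝ) ≤ β + γ/2 := by linarith
  have hθ : β + γ/2 < 2*β - α := by rw [hγdef] at *; linarith
  have hER := gen_ev (C := 16*(c₁+1)/γ) (K := Real.log 4)
    (by norm_num : (0:ℝ) < 1/32) hθ' hθ
  have hreal : ∀ᶠ x : ℝ in atTop,
      2*x^β * ((Real.sqrt (Real.log x / Lb) + 1) * (2 * Real.log x))
        + Real.log 4 ≤ (1/32) * x^(2*β-α) := by
    filter_upwards [hER, eventually_ge_atTop (3:ℝ)] with x hgen hx3
    have hx1 : (1:ℝ) ≤ x := by linarith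
    have hx0 : (0:ℝ) < x := by linarith
    have hlog1 : (1:ℝ) ≤ Real.log x := by
      rw [Real.le_log_iff_exp_le hx0]
      calc Real.exp 1 ≤ 2.7182818286 := Real.exp_one_lt_d9.le
        _ ≤ (3:ℝ) := by norm_num
        _ ≤ x := hx3
    have hone : (1:ℝ) ≤ x^(γ/4) := by
      have := Real.rpow_le_rpow_of_exponent_le hx1 (by linarith : (0:ℝ) ≤ γ/4)
      rwa [Real.rpow_zero] at this
    have hlb1 : Real.sqrt (Real.log x / Lb) ≤ c₁ * x^(γ/4) := by
      have hlog : Real.log x ≤ x^(γ/2)/(γ/2) := log_le_rpow_div hx1 (by linarith)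
      have h1 : Real.log x / Lb ≤ (x^(γ/2)/(γ/2))/Lb := (div_le_div_iff_of_pos_right hLb).mpr hlog
      have h2 : (x^(γ/2)/(γ/2))/Lb = (2/(γ*Lb)) * x^(γ/2) := by
        field_simp
      rw [h2] at h1
      calc Real.sqrt (Real.log x / Lb) ≤ Real.sqrt ((2/(γ*Lb)) * x^(γ/2)) :=
            Real.sqrt_le_sqrt h1
        _ = Real.sqrt (2/(γ*Lb)) * Real.sqrt (x^(γ/2)) :=
            Real.sqrt_mul (by positivity) _
        _ = Real.sqrt (2/(γ*Lb)) * (x^(γ/2))^((1:ℝ)/2) := by simp only [Real.sqrt_eq_rpow]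
        _ = c₁ * x^(γ/4) := by
            rw [hc₁def, ← Real.rpow_mul hx0.le, show γ/2 * ((1:ℝ)/2) = γ/4 by ring]
    have hlog2 : Real.log x ≤ (4/γ) * x^(γ/4) := by
      have := log_le_rpow_div hx1 (by linarith : (0:ℝ) < γ/4)
      calc Real.log x ≤ x^(γ/4)/(γ/4) := this
        _ = (4/γ) * x^(γ/4) := by field_simp
    have hfac1 : Real.sqrt (Real.log x / Lb) + 1 ≤ (c₁+1) * x^(γ/4) := by
      calc Real.sqrt (Real.log x / Lb) + 1 ≤ c₁ * x^(γ/4) + x^(γ/4) := add_le_add hlb1 hone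
        _ = (c₁+1) * x^(γ/4) := by ring
    have hfac2 : 2 * Real.log x ≤ 2*((4/γ) * x^(γ/4)) := by linarith
    have hmain : 2*x^β * ((Real.sqrt (Real.log x / Lb) + 1) * (2 * Real.log x))
        ≤ 2*x^β * (((c₁+1) * x^(γ/4)) * (2*((4/γ) * x^(γ/4)))) := by
      refine mul_le_mul_of_nonneg_left ?_ (by positivity)
      refine mul_le_mul hfac1 hfac2 ?_ (by positivity)
      have : (0:ℝ) ≤ Real.log x := by linarith
      positivity
    have hcollapse : 2*x^β * (((c₁+1) * x^(γ/4)) * (2*((4/γ) * x^(γ/4))))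
        = (16*(c₁+1)/γ) * x^(β + γ/2) := by
      rw [show β + γ/2 = (β+γ/4)+γ/4 by ring, Real.rpow_add hx0, Real.rpow_add hx0]
      field_simp
      ring
    rw [hcollapse] at hmain
    linarith [hgen, hmain]
  exact tendsto_natCast_atTop_atTop.eventually hreal

open Filter in
lemma eventuallyE2 {β : ℝ} (hβ0 : 0 < β) :
    ∀ᶠ d : ℕ in atTop, (2:ℝ) ≤ (d:ℝ)^β := by
  have h := (tendsto_rpow_atTop hβ0).comp tendsto_natCast_atTop_atTop
  exact h.eventually_ge_atTop 2

end RGL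

open scoped Classical in
/-- Random-graph lemma: fix `p, ε, α ∈ (0,1)` and `β ∈ (α,1)`, and let `b := (1-p)⁻¹`. For all
sufficiently large `d`, setting `s := ⌈d^β⌉` and `ℓ := √(α log_b d)`, there is a graph `G` on
`d` vertices with more than `(1/2 - ε) p d²` edges such that every family `S` of `s` pairwise
disjoint `ℓ`-sets has more than `(1/2) d^{-α} C(s,2)` non-adjacent pairs. -/
theorem random_graph_lemma (p ε α β : ℝ)
    (hp : p ∈ Set.Ioo (0:ℝ) 1) (hε : ε ∈ Set.Ioo (0:ℝ) 1)
    (hα : α ∈ Set.Ioo (0:ℝ) 1) (hβ : β ∈ Set.Ioo α 1) :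
    ∃ d₀ : ℕ, ∀ d : ℕ, d₀ ≤ d →
      ∃ G : SimpleGraph (Fin d),
        (1 / 2 - ε) * p * (d : ℝ) ^ 2 < (G.edgeSet.ncard : ℝ) ∧
        ∀ S : Finset (Finset (Fin d)),
          S.card = ⌈(d : ℝ) ^ β⌉₊ →
          (∀ A ∈ S, A.Nonempty ∧
            (A.card : ℝ) ≤ Real.sqrt (α * (Real.log d / Real.log (1 - p)⁻¹))) →
          (S : Set (Finset (Fin d))).Pairwise Disjoint →
          (1 / 2) * (d : ℝ) ^ (-α) * ((⌈(d : ℝ) ^ β⌉₊).choose 2 : ℝ) <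
            (((S.powersetCard 2).filter fun P =>
              ∀ A ∈ P, ∀ B ∈ P, A ≠ B → ∀ a ∈ A, ∀ b ∈ B, ¬ G.Adj a b).card : ℝ) := by
  have hβ0 : (0:ℝ) < β := lt_trans hα.1 hβ.1
  have E1 := Filter.eventually_ge_atTop (3:ℕ)
  have E2 := RGL.eventuallyE2 hβ0
  have E3 := RGL.eventuallyE3 hp hε
  have E4 := RGL.eventuallyE4 hp hα hβ
  have hall := ((E1.and E2).and (E3.and E4))
  rw [Filter.eventually_atTop] at hall
  obtain ⟨d₀, hd₀⟩ := hall
  refine ⟨d₀, fun d hd => ?_⟩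
  obtain ⟨⟨h1, h2⟩, h3, h4⟩ := hd₀ d hd
  exact RGL.main_fixed hp hε hα hβ (le_trans (by norm_num) h1)
    (RGL.deriveHE hp hε d h3) (RGL.deriveHF hp hα hβ d h1 h2 h4)
end

section
/- For all positive integers d and t and every integer n ≥ d, the number of t-tuples (X₁, X₂, …, X_t) such that each X_i is a nonempty subset of {1,2,…,d} and Σ_{i=1}^t |X_i| ≤ n is at most (4d)^n. -/
open Finset

open scoped Classical in
/-- Counting claim: for positive integers `d, t` and `n ≥ d`, the number of `t`-tuples
`(X₁, …, X_t)` of nonempty subsets of `{1,…,d}` with `∑ |Xᵢ| ≤ n` is at most `(4d)^n`. -/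
theorem tuple_counting (d t n : ℕ) (hd : 0 < d) (ht : 0 < t) (hn : d ≤ n) :
    (Finset.univ.filter fun X : Fin t → Finset (Fin d) =>
        (∀ i, (X i).Nonempty) ∧ ∑ i, (X i).card ≤ n).card ≤ (4 * d) ^ n := by
  classical
  have hn0 : 0 < n := lt_of_lt_of_le hd hn
  set F := (Finset.univ.filter fun X : Fin t → Finset (Fin d) =>
        (∀ i, (X i).Nonempty) ∧ ∑ i, (X i).card ≤ n) with hF
  set S : Finset (Fin t → Fin (n+1)) := Finset.univ.filter
      (fun s => (∀ i, 1 ≤ (s i : ℕ)) ∧ ∑ i, (s i : ℕ) ≤ n) with hS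
  set sz : (Fin t → Finset (Fin d)) → (Fin t → Fin (n+1)) :=
      fun X i => ⟨(X i).card % (n+1), Nat.mod_lt _ (Nat.succ_pos n)⟩ with hsz
  have hcardle : ∀ X : Fin t → Finset (Fin d), (∑ i, (X i).card ≤ n) →
      ∀ i, (X i).card ≤ n := by
    intro X h2 i
    exact le_trans (Finset.single_le_sum (f := fun i => (X i).card)
      (fun _ _ => Nat.zero_le _) (Finset.mem_univ i)) h2
  have hmem : ∀ X ∈ F, sz X ∈ S := by
    intro X hX
    simp only [hF, Finset.mem_filter, Finset.mem_univ, true_and] at hX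
    obtain ⟨h1, h2⟩ := hX
    have heq : ∀ i, ((sz X i : ℕ)) = (X i).card := fun i =>
      Nat.mod_eq_of_lt (Nat.lt_succ_of_le (hcardle X h2 i))
    simp only [hS, Finset.mem_filter, Finset.mem_univ, true_and]
    constructor
    · intro i
      show 1 ≤ (X i).card % (n+1)
      rw [Nat.mod_eq_of_lt (Nat.lt_succ_of_le (hcardle X h2 i))]
      exact Finset.card_pos.mpr (h1 i)
    · show ∑ i, (X i).card % (n+1) ≤ n
      calc ∑ i, (X i).card % (n+1) = ∑ i, (X i).card :=
            Finset.sum_congr rfl (fun i _ => heq i)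
        _ ≤ n := h2
  have hfib := Finset.card_eq_sum_card_fiberwise hmem
  -- fiber bound
  have hfibbound : ∀ s ∈ S, (F.filter (fun X => sz X = s)).card ≤ d ^ n := by
    intro s hs
    simp only [hS, mem_filter, mem_univ, true_and] at hs
    obtain ⟨hs1, hs2⟩ := hs
    have hsub : F.filter (fun X => sz X = s) ⊆
        Fintype.piFinset (fun i => Finset.powersetCard (s i : ℕ)
          (Finset.univ : Finset (Fin d))) := by
      intro X hX
      simp only [Finset.mem_filter, hF, Finset.mem_univ, true_and] at hX
      obtain ⟨⟨h1, h2⟩, h3⟩ := hX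
      rw [Fintype.mem_piFinset]
      intro i
      rw [Finset.mem_powersetCard]
      refine ⟨Finset.subset_univ _, ?_⟩
      have hv : ((sz X i : ℕ)) = (s i : ℕ) := congrArg Fin.val (congrFun h3 i)
      have heq : ((sz X i : ℕ)) = (X i).card :=
        Nat.mod_eq_of_lt (Nat.lt_succ_of_le (hcardle X h2 i))
      omega
    calc (F.filter (fun X => sz X = s)).card
        ≤ (Fintype.piFinset (fun i => Finset.powersetCard (s i : ℕ)
            (Finset.univ : Finset (Fin d)))).card := Finset.card_le_card hsub
      _ = ∏ i, (Finset.powersetCard (s i : ℕ) (Finset.univ : Finset (Fin d))).card :=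
          Fintype.card_piFinset _
      _ = ∏ i, Nat.choose d (s i : ℕ) := by
          simp [Finset.card_powersetCard]
      _ ≤ ∏ i, d ^ (s i : ℕ) :=
          Finset.prod_le_prod (fun _ _ => Nat.zero_le _)
            (fun i _ => Nat.choose_le_pow d _)
      _ = d ^ (∑ i, (s i : ℕ)) := Finset.prod_pow_eq_pow_sum _ _ _
      _ ≤ d ^ n := Nat.pow_le_pow_right hd hs2
  -- count of size vectors
  set c : (Fin t → Fin (n+1)) → Fin t → ℕ :=
      fun s i => ∑ j ∈ Finset.Iic i, (s j : ℕ) with hc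
  set e : (Fin t → Fin (n+1)) → Fin t → Fin n :=
      fun s i => ⟨min (c s i - 1) (n-1), by omega⟩ with he
  have hcprop : ∀ s ∈ S, (∀ i, 1 ≤ c s i) ∧ (∀ i, c s i ≤ n) ∧ StrictMono (c s) := by
    intro s hs
    simp only [hS, mem_filter, mem_univ, true_and] at hs
    obtain ⟨hs1, hs2⟩ := hs
    refine ⟨fun i => ?_, fun i => ?_, fun i i' hii' => ?_⟩
    · exact le_trans (hs1 i) (Finset.single_le_sum (f := fun j => ((s j : ℕ)))
        (fun _ _ => Nat.zero_le _) (Finset.mem_Iic.mpr le_rfl))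
    · exact le_trans (Finset.sum_le_sum_of_subset (Finset.subset_univ _)) hs2
    · refine Finset.sum_lt_sum_of_subset (Finset.Iic_subset_Iic.mpr hii'.le)
        (Finset.mem_Iic.mpr le_rfl) (by simp [hii'.not_ge]) (hs1 i')
        (fun _ _ _ => Nat.zero_le _)
  have hScard : S.card ≤ 2 ^ n := by
    have hinj : Set.InjOn (fun s => Finset.univ.image (e s)) S := by
      intro s hs s' hs' him
      obtain ⟨hg, hl, hm⟩ := hcprop s hs
      obtain ⟨hg', hl', hm'⟩ := hcprop s' hs'
      have hem : StrictMono (e s) := by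
        intro i i' hii'
        have := hm hii'
        have := hg i
        simp only [he, Fin.mk_lt_mk]
        have := hl i'
        omega
      have hem' : StrictMono (e s') := by
        intro i i' hii'
        have := hm' hii'
        have := hg' i
        simp only [he, Fin.mk_lt_mk]
        have := hl' i'
        omega
      have him' : Finset.univ.image (e s) = Finset.univ.image (e s') := him
      have hrange : Set.range (e s) = Set.range (e s') := by
        have h1 : ((Finset.univ.image (e s) : Finset (Fin n)) : Set (Fin n)) =
            ((Finset.univ.image (e s') : Finset (Fin n)) : Set (Fin n)) := by
          rw [him']
        simpa [Finset.coe_image, Set.image_univ] using h1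
      have hwf : WellFoundedLT (Fin t) := inferInstance
      have hee : e s = e s' := (hem.range_inj hem').mp hrange
      have hcc : ∀ i, c s i = c s' i := by
        intro i
        have hv : ((e s i : ℕ)) = ((e s' i : ℕ)) := congrArg Fin.val (congrFun hee i)
        simp only [he] at hv
        have := hg i; have := hl i; have := hg' i; have := hl' i
        omega
      -- recover s from c
      have hkey : ∀ k, ∀ i : Fin t, (i : ℕ) ≤ k → ((s i : ℕ)) = ((s' i : ℕ)) := by
        intro k
        induction k with
        | zero =>
          intro i hi
          have h1 : c s i = (s i : ℕ) + ∑ j ∈ Finset.Iio i, ((s j : ℕ)) := by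
            show ∑ j ∈ Finset.Iic i, _ = _
            rw [← Finset.Iio_insert, Finset.sum_insert (by simp)]
          have h2 : c s' i = (s' i : ℕ) + ∑ j ∈ Finset.Iio i, ((s' j : ℕ)) := by
            show ∑ j ∈ Finset.Iic i, _ = _
            rw [← Finset.Iio_insert, Finset.sum_insert (by simp)]
          have h3 : ∑ j ∈ Finset.Iio i, ((s j : ℕ)) = ∑ j ∈ Finset.Iio i, ((s' j : ℕ)) := by
            refine Finset.sum_congr rfl (fun j hj => ?_)
            have := Finset.mem_Iio.mp hj
            have : (j : ℕ) < (i : ℕ) := this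
            omega
          have := hcc i
          omega
        | succ k ih =>
          intro i hi
          have h1 : c s i = (s i : ℕ) + ∑ j ∈ Finset.Iio i, ((s j : ℕ)) := by
            show ∑ j ∈ Finset.Iic i, _ = _
            rw [← Finset.Iio_insert, Finset.sum_insert (by simp)]
          have h2 : c s' i = (s' i : ℕ) + ∑ j ∈ Finset.Iio i, ((s' j : ℕ)) := by
            show ∑ j ∈ Finset.Iic i, _ = _
            rw [← Finset.Iio_insert, Finset.sum_insert (by simp)]
          have h3 : ∑ j ∈ Finset.Iio i, ((s j : ℕ)) = ∑ j ∈ Finset.Iio i, ((s' j : ℕ)) := by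
            refine Finset.sum_congr rfl (fun j hj => ?_)
            have hji := Finset.mem_Iio.mp hj
            have hji' : (j : ℕ) < (i : ℕ) := hji
            exact ih j (by omega)
          have := hcc i
          omega
      funext i
      exact Fin.ext (hkey (i : ℕ) i le_rfl)
    have := Finset.card_le_card_of_injOn (fun s => Finset.univ.image (e s))
      (fun _ _ => Finset.mem_univ _) hinj
    simpa using this
  calc F.card = ∑ s ∈ S, (F.filter (fun X => sz X = s)).card := hfib
    _ ≤ ∑ s ∈ S, d ^ n := Finset.sum_le_sum hfibbound
    _ = S.card * d ^ n := by rw [Finset.sum_const, smul_eq_mul]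
    _ ≤ 2 ^ n * d ^ n := Nat.mul_le_mul_right _ hScard
    _ = (2 * d) ^ n := (mul_pow _ _ _).symm
    _ ≤ (4 * d) ^ n := Nat.pow_le_pow_left (by omega) n
end

section
/- Let G₀ be a graph on a vertex set V₀ with |V₀| = d, let r ≥ 1 be an integer, and let G be the graph with vertex set V₀ × {1,…,r} in which (x,i) and (y,j) are adjacent if and only if xy is an edge of G₀ (the blowup of G₀ by independent sets of size r). If a graph H with vertex set {1,2,…,t} is a minor of G, then there exist nonempty subsets B₁, B₂, …, B_t of V₀ such that Σ_{i=1}^t |B_i| ≤ d·r, each vertex of V₀ belongs to at most r of the sets B_i, and for every edge ij of H, either B_i ∩ B_j ≠ ∅ or some edge of G₀ joins B_i to B_j. -/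
open Finset

/-- `H` is a minor of `G`: there is a family of pairwise disjoint nonempty subsets of `V(G)`,
each inducing a connected subgraph of `G`, with an edge of `G` between the branch sets of the
endpoints of every edge of `H`. -/
def IsMinor {V W : Type*} (H : SimpleGraph W) (G : SimpleGraph V) : Prop :=
  ∃ B : W → Set V,
    (∀ w, (B w).Nonempty) ∧
    (Pairwise fun u v => Disjoint (B u) (B v)) ∧
    (∀ w, (G.induce (B w)).Connected) ∧
    (∀ u v, H.Adj u v → ∃ a ∈ B u, ∃ b ∈ B v, G.Adj a b)

/-- The average degree `2|E(G)|/|V(G)|` of a finite graph. -/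
noncomputable def avgDeg {V : Type*} [Fintype V] (G : SimpleGraph V) : ℝ :=
  2 * G.edgeSet.ncard / Fintype.card V

/-- The constant `λ = max_{x>0} (1 - e^{-x})/√x = 0.63817…`. -/
noncomputable def lambdaMT : ℝ :=
  sSup {y : ℝ | ∃ x : ℝ, 0 < x ∧ y = (1 - Real.exp (-x)) / Real.sqrt x}

open scoped Classical in
/-- Projection of a minor model in a blowup: if `H` is a minor of the blowup `G` of `G₀` by
independent sets of size `r`, then projecting the branch sets to `V(G₀)` yields an
`H`-compatible blobbing. -/
theorem blowup_minor_projection {V₀ : Type} [Fintype V₀] (d r t : ℕ)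
    (hd : Fintype.card V₀ = d) (hr : 1 ≤ r)
    (G₀ : SimpleGraph V₀) (G : SimpleGraph (V₀ × Fin r))
    (hG : ∀ x y : V₀, ∀ i j : Fin r, G.Adj (x, i) (y, j) ↔ G₀.Adj x y)
    (H : SimpleGraph (Fin t)) (hH : IsMinor H G) :
    ∃ B : Fin t → Finset V₀,
      (∀ i, (B i).Nonempty) ∧
      ∑ i, (B i).card ≤ d * r ∧
      (∀ v : V₀, (Finset.univ.filter fun i => v ∈ B i).card ≤ r) ∧
      (∀ i j, H.Adj i j →
        ¬ Disjoint (B i) (B j) ∨ ∃ a ∈ B i, ∃ b ∈ B j, G₀.Adj a b) := by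
  obtain ⟨X, hne, hdisj, -, hedge⟩ := hH
  set S : Fin t → Finset (V₀ × Fin r) := fun i => (Set.toFinite (X i)).toFinset with hS
  have hmemS : ∀ i p, p ∈ S i ↔ p ∈ X i := fun i p => Set.Finite.mem_toFinset _
  refine ⟨fun i => (S i).image Prod.fst, ?_, ?_, ?_, ?_⟩
  · intro i
    obtain ⟨p, hp⟩ := hne i
    exact ⟨p.1, Finset.mem_image.2 ⟨p, (hmemS i p).2 hp, rfl⟩⟩
  · calc ∑ i, ((S i).image Prod.fst).card ≤ ∑ i, (S i).card := by
          exact Finset.sum_le_sum fun i _ => Finset.card_image_le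
      _ = (Finset.univ.biUnion S).card := by
          refine (Finset.card_biUnion ?_).symm
          intro i _ j _ hij
          exact Finset.disjoint_left.2 fun p hpi hpj =>
            (hdisj hij).le_bot ⟨(hmemS i p).1 hpi, (hmemS j p).1 hpj⟩
      _ ≤ Fintype.card (V₀ × Fin r) := Finset.card_le_univ _
      _ = d * r := by simp [hd]
  · intro v
    have hch : ∀ i ∈ Finset.univ.filter (fun i => v ∈ (S i).image Prod.fst),
        ∃ j : Fin r, (v, j) ∈ X i := by
      intro i hi
      obtain ⟨p, hp, hpv⟩ := Finset.mem_image.1 (Finset.mem_filter.1 hi).2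
      exact ⟨p.2, by rw [show (v, p.2) = p from Prod.ext hpv.symm rfl]; exact (hmemS i p).1 hp⟩
    calc (Finset.univ.filter (fun i => v ∈ (S i).image Prod.fst)).card
        ≤ (Finset.univ : Finset (Fin r)).card := by
          refine Finset.card_le_card_of_injOn
            (fun i => if h : ∃ j : Fin r, (v, j) ∈ X i then h.choose else ⟨0, hr⟩)
            (fun _ _ => Finset.mem_univ _) ?_
          intro i hi i' hi' heq
          have h1 := hch i (Finset.mem_coe.1 hi)
          have h2 := hch i' (Finset.mem_coe.1 hi')
          simp only [dif_pos h1, dif_pos h2] at heq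
          by_contra hne'
          exact (hdisj hne').le_bot ⟨h1.choose_spec, heq ▸ h2.choose_spec⟩
      _ = r := by simp
  · intro i j hij
    obtain ⟨a, ha, b, hb, hab⟩ := hedge i j hij
    refine Or.inr ⟨a.1, Finset.mem_image.2 ⟨a, (hmemS i a).2 ha, rfl⟩,
      b.1, Finset.mem_image.2 ⟨b, (hmemS j b).2 hb, rfl⟩, ?_⟩
    exact (hG a.1 b.1 a.2 b.2).1 hab
end
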